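/- Fix δ ∈ [0,1) and for each natural number n ≥ 1 set m_n = ⌈n/(2−δ)⌉ and a_n = (1/n)·[ (n − m_n − 1) − (1/(1−δ))·∑_{i=m_n}^{n−1} ln(i/m_n) ]. Then liminf_{n→∞} a_n ≥ 1 − ln(2−δ)/(1−δ). (This is the analytic core of the proof that NR(q) with q = 1/(2−δ) is asymptotically (1 − ln(2−δ)/(1−δ))-competitive.) -/

import Mathlib

open Filter Real

/-- Sum-integral comparison and ceiling estimates give a per-`n` lower bound. -/
lemma NR_key (δ : ℝ) (h0 : 0 ≤ δ) (h1 : δ < 1) (n : ℕ) (hn : 1 ≤ n) :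
    (1 : ℝ) - Real.log (2 - δ) / (1 - δ) - (2 + 1 / (1 - δ)) / n ≤
      (1 / (n : ℝ)) *
        (((n : ℝ) - (⌈(n : ℝ) / (2 - δ)⌉₊ : ℝ) - 1)
          - (1 / (1 - δ)) *
              ∑ i ∈ Finset.Ico (⌈(n : ℝ) / (2 - δ)⌉₊) n,
                Real.log ((i : ℝ) / (⌈(n : ℝ) / (2 - δ)⌉₊ : ℝ))) := by
  have h2δ : (0:ℝ) < 2 - δ := by linarith
  have h1δ : (0:ℝ) < 1 - δ := by linarith
  have hn0 : (0:ℝ) < n := by exact_mod_cast hn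
  set m : ℕ := ⌈(n : ℝ) / (2 - δ)⌉₊ with hm
  have hm1 : 1 ≤ m := Nat.one_le_ceil_iff.mpr (div_pos hn0 h2δ)
  have hm0 : (0:ℝ) < m := by exact_mod_cast hm1
  have hmn : m ≤ n := by
    refine Nat.ceil_le.mpr ?_
    exact_mod_cast div_le_self hn0.le (by linarith)
  have hmnR : (m:ℝ) ≤ n := by exact_mod_cast hmn
  have hlow : (n : ℝ) / (2 - δ) ≤ m := Nat.le_ceil _
  have hup : (m : ℝ) ≤ (n : ℝ) / (2 - δ) + 1 :=
    (Nat.ceil_lt_add_one (by positivity)).le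
  -- sum ≤ integral
  have mono : MonotoneOn (fun x : ℝ => Real.log (x / m)) (Set.Icc (m:ℝ) n) := by
    intro x hx y hy hxy
    exact Real.log_le_log (div_pos (lt_of_lt_of_le hm0 hx.1) hm0)
      (div_le_div_of_nonneg_right hxy hm0.le)
  have hSI : ∑ i ∈ Finset.Ico m n, Real.log ((i:ℝ) / m) ≤
      ∫ x in (m:ℝ)..(n:ℝ), Real.log (x / m) :=
    MonotoneOn.sum_le_integral_Ico hmn mono
  have h0notin : (0:ℝ) ∉ Set.uIcc (m:ℝ) n := by
    rw [Set.uIcc_of_le hmnR]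
    intro h
    exact absurd h.1 (by linarith)
  have hint : ∫ x in (m:ℝ)..(n:ℝ), Real.log (x / m) =
      (n:ℝ) * Real.log ((n:ℝ)/m) - n + m := by
    have hcongr : Set.EqOn (fun x : ℝ => Real.log (x / m))
        (fun x : ℝ => Real.log x - Real.log m) (Set.uIcc (m:ℝ) n) := by
      intro x hx
      rw [Set.uIcc_of_le hmnR] at hx
      exact Real.log_div (by linarith [hx.1]) (ne_of_gt hm0)
    rw [intervalIntegral.integral_congr hcongr,
      intervalIntegral.integral_sub (intervalIntegral.intervalIntegrable_log h0notin)
        intervalIntegrable_const,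
      integral_log, intervalIntegral.integral_const,
      Real.log_div (ne_of_gt hn0) (ne_of_gt hm0)]
    rw [smul_eq_mul]
    ring
  have hnm : (n:ℝ) / m ≤ 2 - δ := by
    rw [div_le_iff₀ hm0]
    calc (n:ℝ) = (n / (2 - δ)) * (2 - δ) := by field_simp
      _ ≤ m * (2 - δ) := by
          exact mul_le_mul_of_nonneg_right hlow h2δ.le
      _ = (2 - δ) * m := by ring
  have hlog : Real.log ((n:ℝ)/m) ≤ Real.log (2 - δ) :=
    Real.log_le_log (div_pos hn0 hm0) hnm
  have hS : ∑ i ∈ Finset.Ico m n, Real.log ((i:ℝ) / m) ≤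
      (n:ℝ) * Real.log (2 - δ) - n + m := by
    calc ∑ i ∈ Finset.Ico m n, Real.log ((i:ℝ) / m)
        ≤ (n:ℝ) * Real.log ((n:ℝ)/m) - n + m := by rw [← hint]; exact hSI
      _ ≤ (n:ℝ) * Real.log (2 - δ) - n + m := by nlinarith [hn0]
  -- combine
  set L := Real.log (2 - δ)
  set c := 1 / (1 - δ) with hc
  have hcpos : 0 < c := by positivity
  have hkey : (1 + c) * (m:ℝ) ≤ c * n + 1 + c := by
    have h1c : (1 + c) = (2 - δ) * c := by
      rw [hc]; field_simp; ring
    calc (1 + c) * (m:ℝ) ≤ (1 + c) * ((n:ℝ)/(2-δ) + 1) := by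
          exact mul_le_mul_of_nonneg_left hup (by linarith)
      _ = (2 - δ) * c * ((n:ℝ)/(2-δ)) + (1 + c) := by rw [← h1c]; ring
      _ = c * n + 1 + c := by field_simp; ring
  have hinner : (n:ℝ) * (1 - c * L) - (2 + c) ≤
      ((n:ℝ) - m - 1) - c * ∑ i ∈ Finset.Ico m n, Real.log ((i:ℝ) / m) := by
    have h2 : c * (∑ i ∈ Finset.Ico m n, Real.log ((i:ℝ) / m)) ≤
        c * ((n:ℝ) * L - n + m) := mul_le_mul_of_nonneg_left hS hcpos.le
    nlinarith [hkey, h2]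
  calc (1:ℝ) - L / (1 - δ) - (2 + c) / n
      = (1 / (n:ℝ)) * ((n:ℝ) * (1 - c * L) - (2 + c)) := by
        rw [hc]; field_simp
    _ ≤ (1 / (n:ℝ)) * (((n:ℝ) - m - 1)
          - c * ∑ i ∈ Finset.Ico m n, Real.log ((i:ℝ) / m)) := by
        exact mul_le_mul_of_nonneg_left hinner (by positivity)

/-- Analytic core of the proof that `NR(q)` with `q = 1/(2−δ)` is asymptotically
`(1 − ln(2−δ)/(1−δ))`-competitive.  Fix `δ ∈ [0,1)`, and for each number of requests `n`
let `m_n = ⌈n/(2−δ)⌉` be the length of the sampling phase and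
`a_n = (1/n)·[(n − m_n − 1) − (1/(1−δ))·∑_{i=m_n}^{n−1} ln(i/m_n)]` the per-instance lower
bound on the algorithm's expected revenue relative to `OPT`.  Then
`liminf_{n→∞} a_n ≥ 1 − ln(2−δ)/(1−δ)`. -/
theorem NR_liminf_bound (δ : ℝ) (h0 : 0 ≤ δ) (h1 : δ < 1) :
    (1 : ℝ) - Real.log (2 - δ) / (1 - δ) ≤
      Filter.liminf (fun n : ℕ =>
        (1 / (n : ℝ)) *
          (((n : ℝ) - (⌈(n : ℝ) / (2 - δ)⌉₊ : ℝ) - 1)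
            - (1 / (1 - δ)) *
                ∑ i ∈ Finset.Ico (⌈(n : ℝ) / (2 - δ)⌉₊) n,
                  Real.log ((i : ℝ) / (⌈(n : ℝ) / (2 - δ)⌉₊ : ℝ))))
        Filter.atTop := by
  set T : ℝ := 1 - Real.log (2 - δ) / (1 - δ) with hT
  set C : ℝ := 2 + 1 / (1 - δ) with hC
  have hCpos : 0 < C := by
    have : (0:ℝ) < 1 - δ := by linarith
    positivity
  set a : ℕ → ℝ := fun n =>
    (1 / (n : ℝ)) *
      (((n : ℝ) - (⌈(n : ℝ) / (2 - δ)⌉₊ : ℝ) - 1)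
        - (1 / (1 - δ)) *
            ∑ i ∈ Finset.Ico (⌈(n : ℝ) / (2 - δ)⌉₊) n,
              Real.log ((i : ℝ) / (⌈(n : ℝ) / (2 - δ)⌉₊ : ℝ))) with ha
  set g : ℕ → ℝ := fun n => T - C / n with hg
  have hga : ∀ᶠ n in atTop, g n ≤ a n := by
    filter_upwards [eventually_ge_atTop 1] with n hn
    exact NR_key δ h0 h1 n hn
  have htend : Tendsto g atTop (nhds T) := by
    have : Tendsto (fun n : ℕ => C / (n:ℝ)) atTop (nhds 0) :=
      Tendsto.div_atTop tendsto_const_nhds tendsto_natCast_atTop_atTop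
    simpa using tendsto_const_nhds.sub this
  have hgbdd : IsBoundedUnder (· ≥ ·) atTop g :=
    htend.isBoundedUnder_ge
  have hacob : IsCoboundedUnder (· ≥ ·) atTop a := by
    apply isCoboundedUnder_ge_of_eventually_le atTop (x := 1)
    filter_upwards [eventually_ge_atTop 1] with n hn
    have hn0 : (0:ℝ) < n := by exact_mod_cast hn
    have hS : 0 ≤ ∑ i ∈ Finset.Ico (⌈(n : ℝ) / (2 - δ)⌉₊) n,
        Real.log ((i : ℝ) / (⌈(n : ℝ) / (2 - δ)⌉₊ : ℝ)) := by
      apply Finset.sum_nonneg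
      intro i hi
      obtain ⟨hi1, hi2⟩ := Finset.mem_Ico.mp hi
      have hm1 : 1 ≤ ⌈(n : ℝ) / (2 - δ)⌉₊ :=
        Nat.one_le_ceil_iff.mpr (div_pos hn0 (by linarith))
      have hm0 : (0:ℝ) < (⌈(n : ℝ) / (2 - δ)⌉₊ : ℝ) := by exact_mod_cast hm1
      apply Real.log_nonneg
      rw [le_div_iff₀ hm0]
      simpa using (Nat.cast_le.mpr hi1 : ((⌈(n : ℝ) / (2 - δ)⌉₊ : ℕ):ℝ) ≤ i)
    have hc : (0:ℝ) ≤ 1 / (1 - δ) := by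
      have : (0:ℝ) < 1 - δ := by linarith
      positivity
    have hm0' : (0:ℝ) ≤ (⌈(n : ℝ) / (2 - δ)⌉₊ : ℝ) := Nat.cast_nonneg _
    calc a n ≤ (1 / (n:ℝ)) * n := by
          apply mul_le_mul_of_nonneg_left _ (by positivity)
          nlinarith
      _ = 1 := by field_simp
  calc T = liminf g atTop := (htend.liminf_eq).symm
    _ ≤ liminf a atTop := liminf_le_liminf hga hgbdd hacob
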